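/- Let p ≥ 1, let G₁ and G₂ be symmetric positive definite p×p real matrices, let σ² > 0, n > 0 be real numbers, and let δ ∈ ℝᵖ. For λ ≥ 0 define MSE(λ) = (σ²/n)·trace(S(λ)⁻²G₂) + λ²·δᵀG₁S(λ)⁻²G₁δ, where S(λ) = G₂ + λG₁. Then there exists ε > 0 such that MSE(λ) < MSE(0) for every λ ∈ (0, ε); note MSE(0) = (σ²/n)·trace(G₂⁻¹). -/

import Mathlib

open Matrix

attribute [local instance] Matrix.linftyOpNormedRing Matrix.linftyOpNormedAlgebra

private lemma trace_pos_of_posDef {p : ℕ} (hp : 1 ≤ p) {T : Matrix (Fin p) (Fin p) ℝ}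
    (hT : T.PosDef) : 0 < T.trace := by
  have hne : Nonempty (Fin p) := ⟨⟨0, hp⟩⟩
  rw [Matrix.trace]
  apply Finset.sum_pos
  · intro i _
    have hx : (Pi.single i 1 : Fin p → ℝ) ≠ 0 := by
      intro h
      have := congrFun h i
      simp at this
    have := hT.dotProduct_mulVec_pos hx
    simpa [Matrix.diag, Matrix.mulVec_single, single_dotProduct] using this
  · exact Finset.univ_nonempty

private lemma exists_lt_of_hasDerivAt_neg {f : ℝ → ℝ} {c : ℝ} (hf : HasDerivAt f c 0)
    (hc : c < 0) : ∃ ε > 0, ∀ l : ℝ, 0 < l → l < ε → f l < f 0 := by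
  have h := hasDerivAt_iff_tendsto_slope.mp hf
  have h2 : Filter.Tendsto (slope f 0) (nhdsWithin 0 (Set.Ioi 0)) (nhds c) :=
    h.mono_left (nhdsWithin_mono 0 fun x hx => ne_of_gt hx)
  have h3 : ∀ᶠ x in nhdsWithin (0:ℝ) (Set.Ioi 0), slope f 0 x < 0 :=
    h2.eventually_lt_const hc
  obtain ⟨u, hu, hsub⟩ := mem_nhdsGT_iff_exists_Ioo_subset.mp h3
  refine ⟨u, hu, fun l hl hlu => ?_⟩
  have hslope : slope f 0 l < 0 := hsub ⟨hl, hlu⟩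
  rw [slope_def_field] at hslope
  have := (div_neg_iff).mp (by simpa using hslope)
  rcases this with ⟨_, h⟩ | ⟨h, _⟩
  · linarith
  · linarith

private def quadMap {p : ℕ} (δ : Fin p → ℝ) : Matrix (Fin p) (Fin p) ℝ →ₗ[ℝ] ℝ where
  toFun M := δ ⬝ᵥ (M *ᵥ δ)
  map_add' M N := by simp [Matrix.add_mulVec, dotProduct_add]
  map_smul' a M := by simp [Matrix.smul_mulVec, dotProduct_smul]

theorem mse_lt_mse_zero_of_small_lambda
    (p : ℕ) (hp : 1 ≤ p) (G₁ G₂ : Matrix (Fin p) (Fin p) ℝ)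
    (hG₁ : G₁.PosDef) (hG₂ : G₂.PosDef)
    (σ2 n : ℝ) (hσ2 : 0 < σ2) (hn : 0 < n) (δ : Fin p → ℝ)
    (S : ℝ → Matrix (Fin p) (Fin p) ℝ) (hS : ∀ l : ℝ, S l = G₂ + l • G₁)
    (MSE : ℝ → ℝ)
    (hMSE : ∀ l : ℝ, MSE l =
      σ2 / n * Matrix.trace (((S l)⁻¹)ᵀ * (S l)⁻¹ * G₂)
        + l ^ 2 * (δ ⬝ᵥ ((G₁ * ((S l)⁻¹)ᵀ * (S l)⁻¹ * G₁) *ᵥ δ))) :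
    (∃ ε > 0, ∀ l : ℝ, 0 < l → l < ε → MSE l < MSE 0) ∧
      MSE 0 = σ2 / n * Matrix.trace G₂⁻¹ := by
  haveI : CompleteSpace (Matrix (Fin p) (Fin p) ℝ) :=
    inferInstanceAs (CompleteSpace (Fin p → Fin p → ℝ))
  -- basic symmetry facts
  have hG₁t : G₁ᵀ = G₁ := by
    have := hG₁.1
    rwa [Matrix.IsHermitian, Matrix.conjTranspose_eq_transpose_of_trivial] at this
  have hG₂t : G₂ᵀ = G₂ := by
    have := hG₂.1
    rwa [Matrix.IsHermitian, Matrix.conjTranspose_eq_transpose_of_trivial] at this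
  have hSt : ∀ l : ℝ, (S l)ᵀ = S l := fun l => by
    rw [hS l, Matrix.transpose_add, Matrix.transpose_smul, hG₁t, hG₂t]
  have hinv_t : ∀ l : ℝ, ((S l)⁻¹)ᵀ = (S l)⁻¹ := fun l => by
    rw [Matrix.transpose_nonsing_inv, hSt l]
  have hS0 : S 0 = G₂ := by rw [hS 0]; simp
  have hdetG₂ : IsUnit G₂.det := hG₂.det_pos.ne'.isUnit
  have hG₂invmul : G₂⁻¹ * G₂ = 1 := Matrix.nonsing_inv_mul _ hdetG₂
  have hG₂mulinv : G₂ * G₂⁻¹ = 1 := Matrix.mul_nonsing_inv _ hdetG₂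
  -- the inverse map l ↦ (S l)⁻¹ has derivative D at 0
  set D : Matrix (Fin p) (Fin p) ℝ := -(G₂⁻¹ * G₁ * G₂⁻¹) with hD
  set u : (Matrix (Fin p) (Fin p) ℝ)ˣ := hG₂.isUnit.unit with hu
  have hu_spec : (↑u : Matrix (Fin p) (Fin p) ℝ) = G₂ := hG₂.isUnit.unit_spec
  have hu_inv : (↑u⁻¹ : Matrix (Fin p) (Fin p) ℝ) = G₂⁻¹ := by
    rw [Matrix.nonsing_inv_eq_ringInverse, ← hu_spec, Ring.inverse_unit]
  have hderivS : HasDerivAt S G₁ 0 := by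
    have : HasDerivAt (fun l : ℝ => G₂ + l • G₁) ((1:ℝ) • G₁) 0 :=
      ((hasDerivAt_id (0:ℝ)).smul_const G₁).const_add G₂
    simpa [funext hS] using this
  have hfd : HasFDerivAt (Ring.inverse : Matrix (Fin p) (Fin p) ℝ → _)
      (-ContinuousLinearMap.mulLeftRight ℝ _ ↑u⁻¹ ↑u⁻¹) (S 0) := by
    rw [hS0, ← hu_spec]
    exact hasFDerivAt_ringInverse u
  have hA : HasDerivAt (fun l : ℝ => (S l)⁻¹) D 0 := by
    have h1 : HasDerivAt (fun l : ℝ => Ring.inverse (S l))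
        ((-ContinuousLinearMap.mulLeftRight ℝ _ ↑u⁻¹ ↑u⁻¹) G₁) 0 :=
      hfd.comp_hasDerivAt 0 hderivS
    simp only [ContinuousLinearMap.neg_apply, ContinuousLinearMap.mulLeftRight_apply,
      hu_inv, ← Matrix.nonsing_inv_eq_ringInverse] at h1
    simpa [hD, Matrix.mul_assoc] using h1
  have hA0 : (S 0)⁻¹ = G₂⁻¹ := by rw [hS0]
  -- derivative of the first (trace) term
  have hAA : HasDerivAt (fun l : ℝ => (S l)⁻¹ * (S l)⁻¹ * G₂)
      ((D * G₂⁻¹ + G₂⁻¹ * D) * G₂) 0 := by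
    have := (hA.mul hA).mul_const G₂
    rwa [hA0] at this
  have htr : HasDerivAt (fun l : ℝ => Matrix.trace ((S l)⁻¹ * (S l)⁻¹ * G₂))
      (Matrix.trace ((D * G₂⁻¹ + G₂⁻¹ * D) * G₂)) 0 := by
    have hL := (Matrix.traceLinearMap (Fin p) ℝ ℝ).toContinuousLinearMap.hasFDerivAt
      (x := (S 0)⁻¹ * (S 0)⁻¹ * G₂)
    have := hL.comp_hasDerivAt 0 hAA
    exact this
  have hf : HasDerivAt (fun l : ℝ => σ2 / n * Matrix.trace ((S l)⁻¹ * (S l)⁻¹ * G₂))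
      (σ2 / n * Matrix.trace ((D * G₂⁻¹ + G₂⁻¹ * D) * G₂)) 0 := htr.const_mul (σ2 / n)
  -- derivative of the second term is 0
  have hB : HasDerivAt (fun l : ℝ => G₁ * (S l)⁻¹ * (S l)⁻¹ * G₁)
      (((G₁ * D) * G₂⁻¹ + (G₁ * G₂⁻¹) * D) * G₁) 0 := by
    have := (((hA.const_mul G₁)).mul hA).mul_const G₁
    rwa [hA0] at this
  have hg : HasDerivAt (fun l : ℝ => δ ⬝ᵥ ((G₁ * (S l)⁻¹ * (S l)⁻¹ * G₁) *ᵥ δ))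
      (quadMap δ ((((G₁ * D) * G₂⁻¹ + (G₁ * G₂⁻¹) * D) * G₁))) 0 := by
    have hL := (quadMap δ).toContinuousLinearMap.hasFDerivAt
      (x := G₁ * (S 0)⁻¹ * (S 0)⁻¹ * G₁)
    have := hL.comp_hasDerivAt 0 hB
    exact this
  have hquad : HasDerivAt
      (fun l : ℝ => l ^ 2 * (δ ⬝ᵥ ((G₁ * (S l)⁻¹ * (S l)⁻¹ * G₁) *ᵥ δ))) 0 0 := by
    have := (hasDerivAt_pow 2 (0:ℝ)).fun_mul hg
    simpa using this
  -- the full MSE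
  have hMSE' : MSE = fun l : ℝ =>
      σ2 / n * Matrix.trace ((S l)⁻¹ * (S l)⁻¹ * G₂)
        + l ^ 2 * (δ ⬝ᵥ ((G₁ * (S l)⁻¹ * (S l)⁻¹ * G₁) *ᵥ δ)) := by
    funext l
    rw [hMSE l, hinv_t l]
  set c : ℝ := σ2 / n * Matrix.trace ((D * G₂⁻¹ + G₂⁻¹ * D) * G₂) with hc
  have hMSEderiv : HasDerivAt MSE c 0 := by
    rw [hMSE']
    simpa using hf.fun_add hquad
  -- the derivative constant is negative
  have hT : (G₂⁻¹ * G₁ * G₂⁻¹).PosDef := by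
    rw [Matrix.posDef_iff_dotProduct_mulVec]
    constructor
    · rw [Matrix.IsHermitian, Matrix.conjTranspose_eq_transpose_of_trivial,
        Matrix.transpose_mul, Matrix.transpose_mul, Matrix.transpose_nonsing_inv, hG₂t, hG₁t,
        Matrix.mul_assoc]
    · intro x hx
      have hinj : Function.Injective (G₂⁻¹.mulVec) :=
        Matrix.mulVec_injective_iff_isUnit.mpr hG₂.inv.isUnit
      have hx' : G₂⁻¹ *ᵥ x ≠ 0 := by
        intro h
        exact hx (hinj (by simpa using h))
      have h2 := hG₁.dotProduct_mulVec_pos hx'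
      have hG₂invt : G₂⁻¹ᵀ = G₂⁻¹ := by rw [Matrix.transpose_nonsing_inv, hG₂t]
      have hrw : star x ⬝ᵥ ((G₂⁻¹ * G₁ * G₂⁻¹) *ᵥ x)
          = star (G₂⁻¹ *ᵥ x) ⬝ᵥ (G₁ *ᵥ (G₂⁻¹ *ᵥ x)) := by
        simp only [star_trivial, ← Matrix.mulVec_mulVec]
        rw [Matrix.dotProduct_mulVec x G₂⁻¹, ← Matrix.mulVec_transpose, hG₂invt]
      rw [hrw]
      exact h2
  have htrT : 0 < Matrix.trace (G₂⁻¹ * G₁ * G₂⁻¹) := trace_pos_of_posDef hp hT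
  have hkey : Matrix.trace ((D * G₂⁻¹ + G₂⁻¹ * D) * G₂)
      = -(2 * Matrix.trace (G₂⁻¹ * G₁ * G₂⁻¹)) := by
    rw [Matrix.add_mul, Matrix.trace_add, Matrix.mul_assoc D, hG₂invmul, Matrix.mul_one,
      Matrix.trace_mul_cycle G₂⁻¹ D G₂, hG₂mulinv, Matrix.one_mul,
      hD, Matrix.trace_neg]
    ring
  have hcneg : c < 0 := by
    rw [hc, hkey]
    have hpos : 0 < σ2 / n := div_pos hσ2 hn
    nlinarith
  constructor
  · exact exists_lt_of_hasDerivAt_neg hMSEderiv hcneg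
  · rw [hMSE 0, hinv_t 0, hS0]
    rw [Matrix.mul_assoc, hG₂invmul, Matrix.mul_one]
    ring
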